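/- Let F be a filter on a (possibly infinite) set I. Define C_F : PPO_A^I → PPO_A by a ≽ b iff {i ∈ I : a ≽_i b} contains some member of F. Then C_F is well-defined (the aggregate relation is reflexive and transitive) and satisfies unanimity, neutrality, monotonicity, and independence of irrelevant alternatives; moreover F is exactly the collection of decisive sets of C_F and also exactly the collection of strongly decisive sets. If F is an ultrafilter or the trivial filter 2^I, then C_F maps LPO_A^I into LPO_A. -/
import Mathlib


variable {A I : Type*}

/-- A partial preorder: a reflexive and transitive binary relation. -/
def IsPPO (P : A → A → Prop) : Prop := Reflexive P ∧ Transitive P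

/-- A linear (total) preorder: reflexive, transitive and complete. -/
def IsLPO (P : A → A → Prop) : Prop := Reflexive P ∧ Transitive P ∧ ∀ a b, P a b ∨ P b a

/-- A profile of partial preorders. -/
def IsPPOProfile (P : I → A → A → Prop) : Prop := ∀ i, IsPPO (P i)

/-- A profile of linear (total) preorders. -/
def IsLPOProfile (P : I → A → A → Prop) : Prop := ∀ i, IsLPO (P i)

/-- Strict preference. -/
def StrictPref (P : A → A → Prop) (a b : A) : Prop := P a b ∧ ¬ P b a

/-- Indifference. -/
def Indiff (P : A → A → Prop) (a b : A) : Prop := P a b ∧ P b a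

/-- The set `A` contains at least three distinct alternatives. -/
def ThreeAlts (A : Type*) : Prop := ∃ a b c : A, a ≠ b ∧ b ≠ c ∧ a ≠ c

/-- Unanimity. -/
def Unanimity (C : (I → A → A → Prop) → A → A → Prop) : Prop :=
  ∀ P, IsPPOProfile P → ∀ a b : A, (∀ i, P i a b) → C P a b

/-- Independence of irrelevant alternatives. -/
def IIA (C : (I → A → A → Prop) → A → A → Prop) : Prop :=
  ∀ P P' : I → A → A → Prop, IsPPOProfile P → IsPPOProfile P' → ∀ a b : A,
    {i | P i a b} = {i | P' i a b} → {i | P i b a} = {i | P' i b a} →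
    (C P a b ↔ C P' a b)

/-- Neutrality: `C (ρ*P) = ρ*(C P)` for every permutation `ρ` of the alternatives. -/
def Neutrality (C : (I → A → A → Prop) → A → A → Prop) : Prop :=
  ∀ (ρ : Equiv.Perm A) (P : I → A → A → Prop), IsPPOProfile P →
    ∀ x y : A, C (fun i a b => P i (ρ.symm a) (ρ.symm b)) x y ↔ C P (ρ.symm x) (ρ.symm y)

/-- Monotonicity. -/
def Monotonicity (C : (I → A → A → Prop) → A → A → Prop) : Prop :=
  ∀ P P' : I → A → A → Prop, IsPPOProfile P → IsPPOProfile P' → ∀ a b : A,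
    {i | P i a b} ⊆ {i | P' i a b} → {i | P' i b a} ⊆ {i | P i b a} →
    C P a b → C P' a b

/-- `J` is a decisive set: unanimous strict preference on `J` forces weak aggregate preference. -/
def Decisive (C : (I → A → A → Prop) → A → A → Prop) (J : Set I) : Prop :=
  ∀ P, IsPPOProfile P → ∀ a b : A, (∀ j ∈ J, StrictPref (P j) a b) → C P a b

/-- `J` is a strongly decisive set: unanimous weak preference on `J` forces weak aggregate preference. -/
def SDecisive (C : (I → A → A → Prop) → A → A → Prop) (J : Set I) : Prop :=
  ∀ P, IsPPOProfile P → ∀ a b : A, (∀ j ∈ J, P j a b) → C P a b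

/-- The voting system associated to a filter `F` on the set of voters. -/
def FilterRule (F : Filter I) : (I → A → A → Prop) → A → A → Prop :=
  fun P a b => {i | P i a b} ∈ F

theorem filter_voting_system (hA : ThreeAlts A) (F : Filter I) :
    (∀ P : I → A → A → Prop, IsPPOProfile P → IsPPO (FilterRule F P)) ∧
    Unanimity (FilterRule F (A := A)) ∧
    Neutrality (FilterRule F (A := A)) ∧
    Monotonicity (FilterRule F (A := A)) ∧
    IIA (FilterRule F (A := A)) ∧
    (∀ J : Set I, Decisive (FilterRule F (A := A)) J ↔ J ∈ F) ∧
    (∀ J : Set I, SDecisive (FilterRule F (A := A)) J ↔ J ∈ F) ∧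
    ((F = ⊥ ∨ ∃ U : Ultrafilter I, F = ↑U) →
      ∀ P : I → A → A → Prop, IsLPOProfile P → IsLPO (FilterRule F P)) := by
  -- key construction for decisiveness: a profile where exactly J prefers a over b
  have key : ∀ (J : Set I) (a b : A), a ≠ b →
      Decisive (FilterRule F (A := A)) J → J ∈ F := by
    intro J a b hab hdec
    set P : I → A → A → Prop := fun i x y => x = y ∨ (i ∈ J ∧ x = a ∧ y = b) with hP
    have hprof : IsPPOProfile P := by
      intro i
      constructor
      · intro x; exact Or.inl rfl
      · rintro x y z (rfl | ⟨hi, rfl, rfl⟩) (rfl | ⟨hi', rfl, rfl⟩)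
        · exact Or.inl rfl
        · exact Or.inr ⟨hi', rfl, rfl⟩
        · exact Or.inr ⟨hi, rfl, rfl⟩
        · exact absurd rfl hab
    have hC : FilterRule F P a b := by
      apply hdec P hprof
      intro j hj
      refine ⟨Or.inr ⟨hj, rfl, rfl⟩, ?_⟩
      rintro (h | ⟨_, h1, _⟩)
      · exact hab h.symm
      · exact hab h1.symm
    have hset : {i | P i a b} = J := by
      ext i
      simp only [Set.mem_setOf_eq, hP]
      tauto
    rwa [FilterRule, hset] at hC
  obtain ⟨a0, b0, c0, hab0, hbc0, hac0⟩ := hA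
  have memdec : ∀ J : Set I, J ∈ F → SDecisive (FilterRule F (A := A)) J := by
    intro J hJ P _ a b h
    exact F.mem_of_superset hJ (fun j hj => h j hj)
  refine ⟨?_, ?_, ?_, ?_, ?_, ?_, ?_, ?_⟩
  · intro P hP
    constructor
    · intro a
      have : {i | P i a a} = Set.univ := Set.eq_univ_of_forall fun i => (hP i).1 a
      simp [FilterRule, this]
    · intro a b c hab hbc
      exact F.mem_of_superset (F.inter_mem hab hbc)
        (fun i ⟨h1, h2⟩ => (hP i).2 h1 h2)
  · intro P _ a b h
    have : {i | P i a b} = Set.univ := Set.eq_univ_of_forall h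
    simp [FilterRule, this]
  · intro ρ P _ x y
    exact Iff.rfl
  · intro P P' _ _ a b h1 _ hC
    exact F.mem_of_superset hC h1
  · intro P P' _ _ a b h1 _
    rw [FilterRule, FilterRule, h1]
  · intro J
    constructor
    · exact key J a0 b0 hab0
    · intro hJ P hP a b h
      exact memdec J hJ P hP a b (fun j hj => (h j hj).1)
  · intro J
    constructor
    · intro hs
      exact key J a0 b0 hab0 (fun P hP a b h => hs P hP a b (fun j hj => (h j hj).1))
    · exact memdec J
  · rintro (rfl | ⟨U, rfl⟩) P hP
    · exact ⟨fun a => trivial, fun a b c _ _ => trivial, fun a b => Or.inl trivial⟩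
    · refine ⟨?_, ?_, ?_⟩
      · intro a
        have : {i | P i a a} = Set.univ := Set.eq_univ_of_forall fun i => (hP i).1 a
        simp [FilterRule, this]
      · intro a b c hab hbc
        exact Filter.mem_of_superset (Filter.inter_mem hab hbc)
          (fun i ⟨h1, h2⟩ => (hP i).2.1 h1 h2)
      · intro a b
        by_cases h : {i | P i a b} ∈ U
        · exact Or.inl h
        · right
          have hc : {i | P i a b}ᶜ ∈ U := Ultrafilter.compl_mem_iff_notMem.mpr h
          exact Filter.mem_of_superset hc (fun i hi =>
            ((hP i).2.2 a b).resolve_left hi)
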